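/- Suppose b^s ≥ b^d + 1 and consider the system of linear equations (policy evaluation for threshold policy π(b^s, b^d) in the combined problem): u(0,0) = λ u(0,1) + μ_h u(0,0); u(x,0) = -h(x) + λ u(x,1) + μ_l u(x-1,0) + δ u(x,0) for 1 ≤ x ≤ b^s; u(x,1) = R + u(x+1,0) for 0 ≤ x ≤ b^d; u(x,1) = u(x,0) for b^d + 1 ≤ x ≤ b^s. Then these equations coincide with the policy-evaluation equations of the admission-only policy π̂(b^d) restricted to states x ≤ b^s; in particular, if (u, û) are the unique solutions of the respective full systems, then u(x,i) = û(x,i) for all x = 0,…,b^s and i = 0,1. -/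

import Mathlib

lemma pe_aux_nonpos (lam mul beta : ℝ) (bd : ℕ)
    (hlam : 0 < lam) (hmul : 0 < mul) (hbeta : 0 < beta)
    (d : ℕ → ℝ)
    (e0 : (lam + beta) * d 0 = lam * d 1)
    (erec : ∀ x : ℕ, 1 ≤ x → x ≤ bd →
      lam * d (x + 1) = (lam + beta + mul) * d x - mul * d (x - 1))
    (etail : (beta + mul) * d (bd + 1) = mul * d bd) :
    d 0 ≤ 0 := by
  by_contra hpos
  push_neg at hpos
  have mono : ∀ x : ℕ, x ≤ bd → d 0 ≤ d x ∧ d x < d (x + 1) := by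
    intro x hx
    induction x with
    | zero =>
      refine ⟨le_rfl, ?_⟩
      nlinarith
    | succ y ih =>
      have hy : y ≤ bd := Nat.le_of_succ_le hx
      obtain ⟨h1, h2⟩ := ih hy
      have hr := erec (y + 1) (by omega) hx
      simp only [Nat.add_sub_cancel] at hr
      refine ⟨by linarith, ?_⟩
      nlinarith
  obtain ⟨h1, h2⟩ := mono bd le_rfl
  nlinarith

lemma pe_aux_zero (lam mul beta : ℝ) (bd bs : ℕ)
    (hlam : 0 < lam) (hmul : 0 < mul) (hbeta : 0 < beta)
    (hbsd : bd + 1 ≤ bs)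
    (d : ℕ → ℝ)
    (e0 : (lam + beta) * d 0 = lam * d 1)
    (erec : ∀ x : ℕ, 1 ≤ x → x ≤ bd →
      lam * d (x + 1) = (lam + beta + mul) * d x - mul * d (x - 1))
    (etail : ∀ x : ℕ, bd + 1 ≤ x → x ≤ bs → (beta + mul) * d x = mul * d (x - 1)) :
    ∀ x : ℕ, x ≤ bs → d x = 0 := by
  have he : (beta + mul) * d (bd + 1) = mul * d bd := by
    have := etail (bd + 1) le_rfl hbsd
    simpa using this
  have hd0le : d 0 ≤ 0 :=
    pe_aux_nonpos lam mul beta bd hlam hmul hbeta d e0 erec he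
  have hd0ge : (fun x => -d x) 0 ≤ 0 := by
    refine pe_aux_nonpos lam mul beta bd hlam hmul hbeta (fun x => -d x)
      (by linarith) (fun x h1 h2 => by
        have := erec x h1 h2; linarith) (by linarith)
  simp only [neg_nonpos] at hd0ge
  have hd0 : d 0 = 0 := le_antisymm hd0le hd0ge
  intro x
  induction x using Nat.strong_induction_on with
  | _ x ih =>
    intro hx
    match x, hx with
    | 0, _ => exact hd0
    | 1, _ =>
      have : lam * d 1 = 0 := by rw [← e0, hd0]; ring
      exact (mul_eq_zero.mp this).resolve_left hlam.ne'
    | (y + 2), hx =>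
      have hy1 : d (y + 1) = 0 := ih (y + 1) (by omega) (by omega)
      by_cases hcase : y + 2 ≤ bd + 1
      · have hy0 : d y = 0 := ih y (by omega) (by omega)
        have hr := erec (y + 1) (by omega) (by omega)
        simp only [Nat.add_sub_cancel, hy1, hy0] at hr
        have : lam * d (y + 2) = 0 := by linarith
        exact (mul_eq_zero.mp this).resolve_left hlam.ne'
      · have ht := etail (y + 2) (by omega) hx
        rw [show y + 2 - 1 = y + 1 from rfl, hy1] at ht
        have hbm : beta + mul ≠ 0 := by positivity
        have : (beta + mul) * d (y + 2) = 0 := by linarith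
        exact (mul_eq_zero.mp this).resolve_left hbm

theorem policy_evaluation_coincide
    (lam mul muh beta R c : ℝ) (h : ℕ → ℝ) (bs bd : ℕ)
    (u uhat : ℕ → Bool → ℝ)
    (hlam : 0 < lam) (hmul : 0 < mul) (hmuh : mul < muh) (hbeta : 0 < beta)
    (hnorm : lam + muh + beta = 1)
    (hR : 0 ≤ R) (hc : 0 ≤ c) (h0 : h 0 = 0)
    (hbsd : bd + 1 ≤ bs)
    -- policy evaluation equations for the combined problem under π(bs, bd)
    (hu0 : u 0 false = lam * u 0 true + muh * u 0 false)
    (hu1 : ∀ x : ℕ, 1 ≤ x → x ≤ bs →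
      u x false = -h x + lam * u x true + mul * u (x - 1) false
        + (muh - mul) * u x false)
    (hu2 : ∀ x : ℕ, x ≤ bd → u x true = R + u (x + 1) false)
    (hu3 : ∀ x : ℕ, bd + 1 ≤ x → x ≤ bs → u x true = u x false)
    -- policy evaluation equations for the admission-only problem under π̂(bd),
    -- restricted to states x ≤ bs: they are identical to those above
    (hw0 : uhat 0 false = lam * uhat 0 true + muh * uhat 0 false)
    (hw1 : ∀ x : ℕ, 1 ≤ x → x ≤ bs →
      uhat x false = -h x + lam * uhat x true + mul * uhat (x - 1) false
        + (muh - mul) * uhat x false)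
    (hw2 : ∀ x : ℕ, x ≤ bd → uhat x true = R + uhat (x + 1) false)
    (hw3 : ∀ x : ℕ, bd + 1 ≤ x → x ≤ bs → uhat x true = uhat x false) :
    ∀ x : ℕ, x ≤ bs → ∀ i : Bool, u x i = uhat x i := by
  set d : ℕ → ℝ := fun x => u x false - uhat x false with hd
  have e0 : (lam + beta) * d 0 = lam * d 1 := by
    have a1 := hu2 0 (Nat.zero_le bd)
    have a2 := hw2 0 (Nat.zero_le bd)
    simp only [hd]
    linear_combination hu0 - hw0 + lam * a1 - lam * a2
      + (u 0 false - uhat 0 false) * hnorm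
  have erec : ∀ x : ℕ, 1 ≤ x → x ≤ bd →
      lam * d (x + 1) = (lam + beta + mul) * d x - mul * d (x - 1) := by
    intro x h1 h2
    have a1 := hu1 x h1 (by omega)
    have a2 := hw1 x h1 (by omega)
    have a3 := hu2 x h2
    have a4 := hw2 x h2
    simp only [hd]
    linear_combination -a1 + a2 - lam * a3 + lam * a4
      - (u x false - uhat x false) * hnorm
  have etail : ∀ x : ℕ, bd + 1 ≤ x → x ≤ bs →
      (beta + mul) * d x = mul * d (x - 1) := by
    intro x h1 h2
    have a1 := hu1 x (by omega) h2
    have a2 := hw1 x (by omega) h2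
    have a3 := hu3 x h1 h2
    have a4 := hw3 x h1 h2
    simp only [hd]
    linear_combination a1 - a2 + lam * a3 - lam * a4
      + (u x false - uhat x false) * hnorm
  have hz : ∀ x : ℕ, x ≤ bs → d x = 0 :=
    pe_aux_zero lam mul beta bd bs hlam hmul hbeta hbsd d e0 erec etail
  intro x hx i
  cases i with
  | false =>
    have := hz x hx
    simp only [hd] at this
    linarith
  | true =>
    by_cases hxd : x ≤ bd
    · have a1 := hu2 x hxd
      have a2 := hw2 x hxd
      have := hz (x + 1) (by omega)
      simp only [hd] at this
      rw [a1, a2]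
      linarith
    · have a1 := hu3 x (by omega) hx
      have a2 := hw3 x (by omega) hx
      have := hz x hx
      simp only [hd] at this
      rw [a1, a2]
      linarith
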